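/- arXiv:2409.00748 — 3 statements merged into one kernel-verified Lean document; each statement's English description precedes it below -/
import Mathlib

section
/- Let λ₁,…,λ_{d+1} be barycentric coordinates on a nondegenerate d-simplex with vertices a₁,…,a_{d+1}, e_{ij} = a_j − a_i, and define φᵢ = λᵢ + Σ_{j≠i}(λᵢ²λⱼ − λᵢλⱼ²). Then φᵢ(a_k) = δ_{ik} and (e_{kl}·∇)φᵢ(a_k) = 0 for all k ≠ l. That is, φᵢ is the nodal basis function of the TRUNC element associated with the point-value degree of freedom at aᵢ. -/
/-- `φᵢ = λᵢ + Σ_{j≠i}(λᵢ²λⱼ − λᵢλⱼ²)` is the TRUNC nodal basis function for the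
point-value degree of freedom at `aᵢ`: `φᵢ(a_k) = δ_{ik}` and `(e_{kl}·∇)φᵢ(a_k) = 0`. -/
theorem trunc_basis_point_value (d : ℕ)
    (a : Fin (d + 1) → EuclideanSpace ℝ (Fin d))
    (hInd : AffineIndependent ℝ a)
    (lam : Fin (d + 1) → (EuclideanSpace ℝ (Fin d) →ᵃ[ℝ] ℝ))
    (hlam : ∀ i j, lam i (a j) = if i = j then 1 else 0)
    (i : Fin (d + 1))
    (phi : EuclideanSpace ℝ (Fin d) → ℝ)
    (hphi : phi = fun y => lam i y +
      ∑ j ∈ Finset.univ.erase i, ((lam i y) ^ 2 * lam j y - lam i y * (lam j y) ^ 2)) :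
    (∀ k, phi (a k) = if i = k then 1 else 0) ∧
    (∀ k l, k ≠ l → fderiv ℝ phi (a k) (a l - a k) = 0) := by
  classical
  constructor
  · intro k
    simp only [hphi]
    rw [Finset.sum_eq_zero, add_zero, hlam]
    intro j hj
    obtain ⟨hji, -⟩ := Finset.mem_erase.mp hj
    rw [hlam, hlam]
    by_cases hik : i = k <;> by_cases hjk : j = k <;>
      simp_all <;> ring
  · intro k l hkl
    set L : Fin (d + 1) → EuclideanSpace ℝ (Fin d) →L[ℝ] ℝ :=
      fun j => LinearMap.toContinuousLinearMap (lam j).linear with hL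
    have hHas : ∀ j x, HasFDerivAt (fun y => lam j y) (L j) x := by
      intro j x
      have h : (fun y => lam j y) = fun y => L j y + lam j 0 := by
        funext y
        have := congrFun (AffineMap.decomp (lam j)) y
        simpa [hL] using this
      rw [h]
      exact (L j).hasFDerivAt.add_const _
    have hphi2 : phi = fun y => lam i y + ∑ j ∈ Finset.univ.erase i,
        ((lam i y * lam i y) * lam j y - lam i y * (lam j y * lam j y)) := by
      rw [hphi]; funext y; congr 1
      exact Finset.sum_congr rfl fun j _ => by ring
    have hterm : ∀ j, HasFDerivAt
        (fun y => (lam i y * lam i y) * lam j y - lam i y * (lam j y * lam j y))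
        (((lam i (a k) * lam i (a k)) • L j
            + lam j (a k) • (lam i (a k) • L i + lam i (a k) • L i))
          - (lam i (a k) • (lam j (a k) • L j + lam j (a k) • L j)
            + (lam j (a k) * lam j (a k)) • L i)) (a k) :=
      fun j => (((hHas i (a k)).mul (hHas i (a k))).mul (hHas j (a k))).sub
        ((hHas i (a k)).mul ((hHas j (a k)).mul (hHas j (a k))))
    have hphi' : HasFDerivAt phi
        (L i + ∑ j ∈ Finset.univ.erase i,
          (((lam i (a k) * lam i (a k)) • L j
            + lam j (a k) • (lam i (a k) • L i + lam i (a k) • L i))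
          - (lam i (a k) • (lam j (a k) • L j + lam j (a k) • L j)
            + (lam j (a k) * lam j (a k)) • L i))) (a k) := by
      rw [hphi2]
      exact (hHas i (a k)).add (HasFDerivAt.fun_sum fun j _ => hterm j)
    rw [hphi'.fderiv]
    have hLv : ∀ m, L m (a l - a k)
        = (if m = l then (1 : ℝ) else 0) - (if m = k then (1 : ℝ) else 0) := by
      intro m
      have : L m (a l - a k) = lam m (a l) - lam m (a k) := by
        simpa [hL, vsub_eq_sub] using (lam m).linearMap_vsub (a l) (a k)
      rw [this, hlam, hlam]
    simp only [ContinuousLinearMap.add_apply, ContinuousLinearMap.coe_sum',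
      Finset.sum_apply, ContinuousLinearMap.sub_apply, ContinuousLinearMap.smul_apply,
      smul_eq_mul, hLv, hlam]
    have key : ∀ j ∈ Finset.univ.erase i,
        (((if i = k then (1:ℝ) else 0) * (if i = k then (1:ℝ) else 0)) *
            ((if j = l then (1:ℝ) else 0) - (if j = k then (1:ℝ) else 0))
          + (if j = k then (1:ℝ) else 0) *
            ((if i = k then (1:ℝ) else 0) *
              ((if i = l then (1:ℝ) else 0) - (if i = k then (1:ℝ) else 0))
            + (if i = k then (1:ℝ) else 0) *
              ((if i = l then (1:ℝ) else 0) - (if i = k then (1:ℝ) else 0)))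
          - ((if i = k then (1:ℝ) else 0) *
              ((if j = k then (1:ℝ) else 0) *
                ((if j = l then (1:ℝ) else 0) - (if j = k then (1:ℝ) else 0))
              + (if j = k then (1:ℝ) else 0) *
                ((if j = l then (1:ℝ) else 0) - (if j = k then (1:ℝ) else 0)))
            + ((if j = k then (1:ℝ) else 0) * (if j = k then (1:ℝ) else 0)) *
              ((if i = l then (1:ℝ) else 0) - (if i = k then (1:ℝ) else 0))))
        = (if i = k then (1:ℝ) else 0) *
            ((if j = l then (1:ℝ) else 0) - (if j = k then (1:ℝ) else 0))
          - (if j = k then (1:ℝ) else 0) *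
            ((if i = l then (1:ℝ) else 0) - (if i = k then (1:ℝ) else 0)) := by
      intro j hj
      obtain ⟨hji, -⟩ := Finset.mem_erase.mp hj
      by_cases hik : i = k <;> by_cases hjk : j = k
      · exact absurd (hjk.trans hik.symm) hji
      · simp only [if_pos hik, if_neg hjk]; ring
      · simp only [if_neg hik, if_pos hjk]; ring
      · simp only [if_neg hik, if_neg hjk]; ring
    rw [Finset.sum_congr rfl key, Finset.sum_sub_distrib, ← Finset.mul_sum,
      ← Finset.sum_mul]
    by_cases hik : i = k
    · subst hik
      have hil : i ≠ l := hkl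
      simp [Finset.sum_sub_distrib, Finset.sum_ite_eq', hil, Ne.symm hil]
    · simp only [Finset.sum_sub_distrib, Finset.sum_ite_eq', Finset.mem_erase,
        Finset.mem_univ, and_true]
      have hlk : l ≠ k := fun h => hkl h.symm
      by_cases hil : i = l <;>
        simp [hik, hil, Ne.symm hik, hkl, hlk] <;> ring_nf
end

section
/- Let λ₁,…,λ_{d+1} be barycentric coordinates on a nondegenerate d-simplex with vertices a₁,…,a_{d+1}, e_{ij} = a_j − a_i, and define φ_{ij} = ½(λᵢλⱼ + λᵢ²λⱼ − λᵢλⱼ²) for i ≠ j. Then φ_{ij}(a_k) = 0 for all k, and (e_{kl}·∇)φ_{ij}(a_k) = δ_{ik}δ_{jl} for all k ≠ l. That is, φ_{ij} is the TRUNC nodal basis function dual to the degree of freedom (e_{ij}·∇)p(aᵢ). -/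
private lemma aff_hasFDerivAt {d : ℕ} (f : EuclideanSpace ℝ (Fin d) →ᵃ[ℝ] ℝ)
    (x : EuclideanSpace ℝ (Fin d)) :
    HasFDerivAt (fun y => f y) (LinearMap.toContinuousLinearMap f.linear) x := by
  have h : ∀ y, f y = LinearMap.toContinuousLinearMap f.linear y + f 0 := by
    intro y
    have := f.map_vadd 0 y
    simpa using this
  have : (fun y => f y) = fun y => LinearMap.toContinuousLinearMap f.linear y + f 0 := by
    funext y; exact h y
  rw [this]
  exact (LinearMap.toContinuousLinearMap f.linear).hasFDerivAt.add_const _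

set_option maxHeartbeats 1000000 in
/-- `φ_{ij} = ½(λᵢλⱼ + λᵢ²λⱼ − λᵢλⱼ²)` is the TRUNC nodal basis function dual to the
degree of freedom `(e_{ij}·∇)p(aᵢ)`: it vanishes at every vertex and
`(e_{kl}·∇)φ_{ij}(a_k) = δ_{ik}δ_{jl}`. -/
theorem trunc_basis_edge_derivative (d : ℕ)
    (a : Fin (d + 1) → EuclideanSpace ℝ (Fin d))
    (hInd : AffineIndependent ℝ a)
    (lam : Fin (d + 1) → (EuclideanSpace ℝ (Fin d) →ᵃ[ℝ] ℝ))
    (hlam : ∀ i j, lam i (a j) = if i = j then 1 else 0)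
    (i j : Fin (d + 1)) (hij : i ≠ j)
    (phi : EuclideanSpace ℝ (Fin d) → ℝ)
    (hphi : phi = fun y =>
      (1 / 2 : ℝ) * (lam i y * lam j y + (lam i y) ^ 2 * lam j y - lam i y * (lam j y) ^ 2)) :
    (∀ k, phi (a k) = 0) ∧
    (∀ k l, k ≠ l → fderiv ℝ phi (a k) (a l - a k)
      = (if i = k then (1 : ℝ) else 0) * (if j = l then (1 : ℝ) else 0)) := by
  constructor
  · intro k
    have hi := hlam i k
    have hj := hlam j k
    subst hphi
    simp only
    rcases eq_or_ne i k with hik | hik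
    · have : j ≠ k := fun h => hij (hik.trans h.symm)
      rw [hi, hj]; simp [this]
    · rw [hi, hj]; simp [hik]
  · intro k l hkl
    have hphi' : phi = fun y =>
        (1 / 2 : ℝ) * (lam i y * lam j y + (lam i y * lam i y) * lam j y
          - lam i y * (lam j y * lam j y)) := by
      rw [hphi]; funext y; ring
    set Li := LinearMap.toContinuousLinearMap (lam i).linear with hLi
    set Lj := LinearMap.toContinuousLinearMap (lam j).linear with hLj
    have hu : HasFDerivAt (fun y => lam i y) Li (a k) := aff_hasFDerivAt _ _
    have hv : HasFDerivAt (fun y => lam j y) Lj (a k) := aff_hasFDerivAt _ _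
    have hD := (((hu.mul hv).add ((hu.mul hu).mul hv)).sub (hu.mul (hv.mul hv))).const_mul
      (1 / 2 : ℝ)
    rw [hphi']
    erw [hD.fderiv]
    have hLiv : Li (a l - a k) = lam i (a l) - lam i (a k) := by
      have := (lam i).linearMap_vsub (a l) (a k)
      simpa [hLi] using this
    have hLjv : Lj (a l - a k) = lam j (a l) - lam j (a k) := by
      have := (lam j).linearMap_vsub (a l) (a k)
      simpa [hLj] using this
    simp only [ContinuousLinearMap.smul_apply, ContinuousLinearMap.add_apply,
      ContinuousLinearMap.sub_apply, hLiv, hLjv, smul_eq_mul, Pi.mul_apply]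
    rw [hlam i k, hlam j k, hlam i l, hlam j l]
    have hjk_ik : i = k → j ≠ k := fun h h' => hij (h.trans h'.symm)
    have hjl_il : i = l → j ≠ l := fun h h' => hij (h.trans h'.symm)
    by_cases hik : i = k <;> by_cases hjl : j = l <;>
      simp_all [hkl, hkl.symm, Ne.symm] <;> ring_nf <;>
      first
      | rfl
      | (by_cases hjk : j = k <;> by_cases hil : i = l <;> simp_all <;> ring)
end

section
/- Unisolvence of the TRUNC element: Let K be a nondegenerate d-simplex with vertices a₁,…,a_{d+1}, and let Z_K = P₂(K) ⊕ span{λᵢ²λⱼ − λᵢλⱼ² : 1 ≤ i < j ≤ d+1}. If p ∈ Z_K satisfies p(aᵢ) = 0 and (e_{ij}·∇)p(aᵢ) = 0 for all 1 ≤ i ≤ d+1 and all j ≠ i, then p ≡ 0. -/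
private lemma trunc_aux_val (n : ℕ) (B c : Fin n → Fin n → ℝ) (t : Fin n)
    (lt : Fin n → ℝ) (hlt : ∀ k, lt k = if k = t then 1 else 0) :
    (∑ i, ∑ j, B i j * (lt i * lt j)) +
      (∑ i, ∑ j, (if i < j then c i j * (lt i ^ 2 * lt j - lt i * lt j ^ 2) else 0))
    = B t t := by
  have hcub0 : ∑ i, ∑ j, (if i < j then c i j * (lt i ^ 2 * lt j - lt i * lt j ^ 2) else 0)
      = 0 := by
    refine Finset.sum_eq_zero fun i _ => Finset.sum_eq_zero fun j _ => ?_
    by_cases h : i < j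
    · have hne : i ≠ j := ne_of_lt h
      by_cases hi : i = t <;> by_cases hj : j = t <;> simp_all [hlt]
    · simp [h]
  have hquad0 : ∑ i, ∑ j, B i j * (lt i * lt j) = B t t := by
    simp only [hlt]
    simp [mul_ite, ite_mul, Finset.sum_ite_eq, Finset.sum_ite_eq']
  rw [hquad0, hcub0, add_zero]

private lemma trunc_aux_quadscalar (n : ℕ) (B : Fin n → Fin n → ℝ) (t s : Fin n) :
    ∑ i, ∑ j, B i j * ((if i = t then (1:ℝ) else 0) * ((if j = s then (1:ℝ) else 0) - (if j = t then (1:ℝ) else 0))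
        + (if j = t then (1:ℝ) else 0) * ((if i = s then (1:ℝ) else 0) - (if i = t then (1:ℝ) else 0)))
      = B t s + B s t - 2 * B t t := by
  simp only [mul_ite, ite_mul, mul_sub, mul_add, mul_one, mul_zero, zero_mul, one_mul,
    Finset.sum_sub_distrib, Finset.sum_add_distrib, Finset.sum_ite_eq, Finset.sum_ite_eq',
    Finset.mem_univ, if_true, Finset.sum_ite_irrel, Finset.sum_const_zero]
  ring

private lemma trunc_aux_cubscalar (n : ℕ) (c : Fin n → Fin n → ℝ) (t s : Fin n) :
    ∑ i, ∑ j, (if i < j then c i j *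
        ((if i = t then (1:ℝ) else 0) * (if i = t then (1:ℝ) else 0) * ((if j = s then (1:ℝ) else 0) - (if j = t then (1:ℝ) else 0))
          + (if j = t then (1:ℝ) else 0) * ((if i = t then (1:ℝ) else 0) * ((if i = s then (1:ℝ) else 0) - (if i = t then (1:ℝ) else 0))
              + (if i = t then (1:ℝ) else 0) * ((if i = s then (1:ℝ) else 0) - (if i = t then (1:ℝ) else 0)))
          - ((if i = t then (1:ℝ) else 0) * ((if j = t then (1:ℝ) else 0) * ((if j = s then (1:ℝ) else 0) - (if j = t then (1:ℝ) else 0))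
              + (if j = t then (1:ℝ) else 0) * ((if j = s then (1:ℝ) else 0) - (if j = t then (1:ℝ) else 0)))
            + (if j = t then (1:ℝ) else 0) * (if j = t then (1:ℝ) else 0) * ((if i = s then (1:ℝ) else 0) - (if i = t then (1:ℝ) else 0)))) else 0)
      = (if t < s then c t s else 0) - (if s < t then c s t else 0) := by
  have step : ∀ i j : Fin n, (if i < j then c i j *
        ((if i = t then (1:ℝ) else 0) * (if i = t then (1:ℝ) else 0) * ((if j = s then (1:ℝ) else 0) - (if j = t then (1:ℝ) else 0))
          + (if j = t then (1:ℝ) else 0) * ((if i = t then (1:ℝ) else 0) * ((if i = s then (1:ℝ) else 0) - (if i = t then (1:ℝ) else 0))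
              + (if i = t then (1:ℝ) else 0) * ((if i = s then (1:ℝ) else 0) - (if i = t then (1:ℝ) else 0)))
          - ((if i = t then (1:ℝ) else 0) * ((if j = t then (1:ℝ) else 0) * ((if j = s then (1:ℝ) else 0) - (if j = t then (1:ℝ) else 0))
              + (if j = t then (1:ℝ) else 0) * ((if j = s then (1:ℝ) else 0) - (if j = t then (1:ℝ) else 0)))
            + (if j = t then (1:ℝ) else 0) * (if j = t then (1:ℝ) else 0) * ((if i = s then (1:ℝ) else 0) - (if i = t then (1:ℝ) else 0)))) else 0)
        = (if i = t then (if j = s then (if i < j then c i j else 0) else 0) else 0)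
          - (if i = s then (if j = t then (if i < j then c i j else 0) else 0) else 0) := by
    intro i j
    by_cases h : i < j <;> by_cases h1 : i = t <;> by_cases h2 : j = s <;>
      by_cases h3 : i = s <;> by_cases h4 : j = t <;>
      simp_all <;> (first | (split_ifs <;> first | ring | omega) | ring | omega)
  simp only [step, Finset.sum_sub_distrib, Finset.sum_ite_eq, Finset.sum_ite_eq',
    Finset.mem_univ, if_true, Finset.sum_ite_irrel, Finset.sum_const_zero]

private lemma trunc_aux_eval {E : Type*} [NormedAddCommGroup E] [NormedSpace ℝ E]
    (n : ℕ) (B c : Fin n → Fin n → ℝ) (t s : Fin n)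
    (L : Fin n → E →L[ℝ] ℝ) (lt : Fin n → ℝ) (v : E)
    (hlt : ∀ k, lt k = if k = t then 1 else 0)
    (hL : ∀ k, L k v = (if k = s then 1 else 0) - (if k = t then 1 else 0)) :
    ((∑ i, ∑ j, B i j • (lt i • L j + lt j • L i)) +
      ∑ i, ∑ j, (if i < j then c i j •
        (((lt i * lt i) • L j + lt j • (lt i • L i + lt i • L i)) -
          (lt i • (lt j • L j + lt j • L j) + (lt j * lt j) • L i)) else 0)) v
    = (B t s + B s t - 2 * B t t)
      + ((if t < s then c t s else 0) - (if s < t then c s t else 0)) := by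
  have happ : ((∑ i, ∑ j, B i j • (lt i • L j + lt j • L i)) +
      ∑ i, ∑ j, (if i < j then c i j •
        (((lt i * lt i) • L j + lt j • (lt i • L i + lt i • L i)) -
          (lt i • (lt j • L j + lt j • L j) + (lt j * lt j) • L i)) else 0)) v
      = (∑ i, ∑ j, B i j * (lt i * L j v + lt j * L i v)) +
        ∑ i, ∑ j, (if i < j then c i j *
          (lt i * lt i * L j v + lt j * (lt i * L i v + lt i * L i v) -
            (lt i * (lt j * L j v + lt j * L j v) + lt j * lt j * L i v)) else 0) := by
    rw [ContinuousLinearMap.add_apply, ContinuousLinearMap.sum_apply,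
      ContinuousLinearMap.sum_apply]
    congr 1
    · refine Finset.sum_congr rfl fun i _ => ?_
      rw [ContinuousLinearMap.sum_apply]
      refine Finset.sum_congr rfl fun j _ => ?_
      simp only [ContinuousLinearMap.smul_apply, ContinuousLinearMap.add_apply, smul_eq_mul]
    · refine Finset.sum_congr rfl fun i _ => ?_
      rw [ContinuousLinearMap.sum_apply]
      refine Finset.sum_congr rfl fun j _ => ?_
      by_cases h : i < j
      · simp only [if_pos h, ContinuousLinearMap.smul_apply, ContinuousLinearMap.sub_apply,
          ContinuousLinearMap.add_apply, smul_eq_mul]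
      · simp only [if_neg h, ContinuousLinearMap.zero_apply]
  rw [happ]
  have h1 : ∀ i j : Fin n, B i j * (lt i * L j v + lt j * L i v)
      = B i j * ((if i = t then (1:ℝ) else 0) * ((if j = s then (1:ℝ) else 0) - (if j = t then (1:ℝ) else 0))
        + (if j = t then (1:ℝ) else 0) * ((if i = s then (1:ℝ) else 0) - (if i = t then (1:ℝ) else 0))) := by
    intro i j; rw [hlt, hlt, hL, hL]
  have h2 : ∀ i j : Fin n, (if i < j then c i j *
        (lt i * lt i * L j v + lt j * (lt i * L i v + lt i * L i v) -
          (lt i * (lt j * L j v + lt j * L j v) + lt j * lt j * L i v)) else 0)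
      = (if i < j then c i j *
        ((if i = t then (1:ℝ) else 0) * (if i = t then (1:ℝ) else 0) * ((if j = s then (1:ℝ) else 0) - (if j = t then (1:ℝ) else 0))
          + (if j = t then (1:ℝ) else 0) * ((if i = t then (1:ℝ) else 0) * ((if i = s then (1:ℝ) else 0) - (if i = t then (1:ℝ) else 0))
              + (if i = t then (1:ℝ) else 0) * ((if i = s then (1:ℝ) else 0) - (if i = t then (1:ℝ) else 0)))
          - ((if i = t then (1:ℝ) else 0) * ((if j = t then (1:ℝ) else 0) * ((if j = s then (1:ℝ) else 0) - (if j = t then (1:ℝ) else 0))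
              + (if j = t then (1:ℝ) else 0) * ((if j = s then (1:ℝ) else 0) - (if j = t then (1:ℝ) else 0)))
            + (if j = t then (1:ℝ) else 0) * (if j = t then (1:ℝ) else 0) * ((if i = s then (1:ℝ) else 0) - (if i = t then (1:ℝ) else 0)))) else 0) := by
    intro i j; rw [hlt, hlt, hL, hL]
  rw [Finset.sum_congr rfl fun i _ => Finset.sum_congr rfl fun j _ => h1 i j,
    Finset.sum_congr rfl fun i _ => Finset.sum_congr rfl fun j _ => h2 i j,
    trunc_aux_quadscalar n B t s, trunc_aux_cubscalar n c t s]

set_option maxHeartbeats 1600000 in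
/-- Unisolvence of the TRUNC element: if `p ∈ Z_K = P₂(K) ⊕ span{λᵢ²λⱼ − λᵢλⱼ² : i < j}`
vanishes together with all edge-directional derivatives `(e_{ij}·∇)p(aᵢ)` at every vertex,
then `p ≡ 0`. -/
theorem trunc_unisolvence (d : ℕ) (hd : 2 ≤ d)
    (a : Fin (d + 1) → EuclideanSpace ℝ (Fin d))
    (hInd : AffineIndependent ℝ a)
    (lam : Fin (d + 1) → (EuclideanSpace ℝ (Fin d) →ᵃ[ℝ] ℝ))
    (hlam : ∀ i j, lam i (a j) = if i = j then 1 else 0)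
    (p : EuclideanSpace ℝ (Fin d) → ℝ)
    (hp : ∃ q : MvPolynomial (Fin d) ℝ, q.totalDegree ≤ 2 ∧
      ∃ c : Fin (d + 1) → Fin (d + 1) → ℝ, ∀ x, p x =
        MvPolynomial.eval (fun m => x m) q +
        ∑ i, ∑ j, if i < j then
          c i j * ((lam i x) ^ 2 * lam j x - lam i x * (lam j x) ^ 2) else 0)
    (hval : ∀ i, p (a i) = 0)
    (hder : ∀ i j, j ≠ i → fderiv ℝ p (a i) (a j - a i) = 0) :
    ∀ x, p x = 0 := by
  classical
  obtain ⟨q, hq2, c, hrep⟩ := hp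
  -- ## Step 1 : barycentric facts
  have htop : affineSpan ℝ (Set.range a) = ⊤ := by
    rw [hInd.affineSpan_eq_top_iff_card_eq_finrank_add_one]
    simp
  have hbar : ∀ x : EuclideanSpace ℝ (Fin d),
      (∑ k, lam k x = 1) ∧ (∀ m, x m = ∑ j, lam j x * a j m) := by
    intro x
    have hx : x ∈ affineSpan ℝ (Set.range a) := htop ▸ AffineSubspace.mem_top ℝ _ x
    obtain ⟨w, hw1, hwx⟩ := eq_affineCombination_of_mem_affineSpan_of_fintype hx
    have hlamw : ∀ k, lam k x = w k := by
      intro k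
      rw [hwx, Finset.map_affineCombination _ a w hw1 (lam k),
        Finset.affineCombination_eq_linear_combination _ _ _ hw1]
      simp [Function.comp, hlam, mul_ite]
    constructor
    · simp only [hlamw]; exact hw1
    · intro m
      have hxl : x = ∑ j, w j • a j := by
        rw [hwx, Finset.affineCombination_eq_linear_combination _ _ _ hw1]
      have hm := congrArg (fun y : EuclideanSpace ℝ (Fin d) => EuclideanSpace.proj m y) hxl
      have hx2 : x m = ∑ j, w j * a j m := by simpa using hm
      rw [hx2]
      exact Finset.sum_congr rfl fun j _ => by rw [hlamw]
  have hsum1 : ∀ x : EuclideanSpace ℝ (Fin d), ∑ k, lam k x = 1 := fun x => (hbar x).1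
  have hcoord : ∀ (x : EuclideanSpace ℝ (Fin d)) (m : Fin d),
      x m = ∑ j, lam j x * a j m := fun x => (hbar x).2
  -- ## Step 2 : the quadratic part in barycentric form
  have honerep : ∀ x : EuclideanSpace ℝ (Fin d),
      ∑ i, ∑ j, (1 : ℝ) * (lam i x * lam j x) = 1 := by
    intro x
    have h1 : ∀ i : Fin (d+1), ∑ j, (1 : ℝ) * (lam i x * lam j x) = lam i x := by
      intro i
      rw [Finset.sum_congr rfl fun j _ => show (1 : ℝ) * (lam i x * lam j x)
            = lam i x * lam j x by ring,
        ← Finset.mul_sum, hsum1 x, mul_one]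
    rw [Finset.sum_congr rfl fun i _ => h1 i, hsum1 x]
  have hXrep : ∀ (m : Fin d) (x : EuclideanSpace ℝ (Fin d)),
      ∑ i, ∑ j, (a i m) * (lam i x * lam j x) = x m := by
    intro m x
    have h1 : ∀ i : Fin (d+1), ∑ j, (a i m) * (lam i x * lam j x) = lam i x * a i m := by
      intro i
      rw [Finset.sum_congr rfl fun j _ => show (a i m) * (lam i x * lam j x)
            = (lam i x * a i m) * lam j x by ring,
        ← Finset.mul_sum, hsum1 x, mul_one]
    rw [Finset.sum_congr rfl fun i _ => h1 i, ← hcoord x m]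
  have hXXrep : ∀ (m m' : Fin d) (x : EuclideanSpace ℝ (Fin d)),
      ∑ i, ∑ j, (a i m * a j m') * (lam i x * lam j x) = x m * x m' := by
    intro m m' x
    have h1 : ∀ i : Fin (d+1), ∑ j, (a i m * a j m') * (lam i x * lam j x)
        = (lam i x * a i m) * x m' := by
      intro i
      rw [Finset.sum_congr rfl fun j _ => show (a i m * a j m') * (lam i x * lam j x)
            = (lam i x * a i m) * (lam j x * a j m') by ring,
        ← Finset.mul_sum, ← hcoord x m']
    rw [Finset.sum_congr rfl fun i _ => h1 i, ← Finset.sum_mul, ← hcoord x m]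
  -- extraction of one variable from a monomial
  have hext : ∀ (u : Fin d → ℕ) (m0 : Fin d), 1 ≤ u m0 →
      (∀ x : EuclideanSpace ℝ (Fin d), ∏ m, (x m) ^ (u m)
        = x m0 * ∏ m, (x m) ^ (Function.update u m0 (u m0 - 1) m))
      ∧ (∑ m, Function.update u m0 (u m0 - 1) m) = (∑ m, u m) - 1 := by
    intro u m0 h1
    constructor
    · intro x
      rw [← Finset.mul_prod_erase Finset.univ (fun m => (x m) ^ (u m)) (Finset.mem_univ m0),
        ← Finset.mul_prod_erase Finset.univ
          (fun m => (x m) ^ (Function.update u m0 (u m0 - 1) m)) (Finset.mem_univ m0)]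
      have he : ∏ m ∈ Finset.univ.erase m0, (x m) ^ (Function.update u m0 (u m0 - 1) m)
          = ∏ m ∈ Finset.univ.erase m0, (x m) ^ (u m) :=
        Finset.prod_congr rfl fun m hm => by
          rw [Function.update_of_ne (Finset.ne_of_mem_erase hm)]
      rw [he, Function.update_self, ← mul_assoc]
      congr 1
      rw [← pow_succ']
      congr 1
      omega
    · rw [Finset.sum_update_of_mem (Finset.mem_univ m0), Finset.sdiff_singleton_eq_erase]
      have h2 := Finset.add_sum_erase Finset.univ u (Finset.mem_univ m0)
      omega
  have hpos : ∀ (u : Fin d → ℕ), 1 ≤ ∑ m, u m → ∃ m0, 1 ≤ u m0 := by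
    intro u hu
    by_contra h
    push_neg at h
    have : ∑ m, u m = 0 := Finset.sum_eq_zero fun m _ => by have := h m; omega
    omega
  have hallz : ∀ (u : Fin d → ℕ), (∑ m, u m) = 0 →
      ∀ x : EuclideanSpace ℝ (Fin d), ∏ m, (x m) ^ (u m) = 1 := by
    intro u hu x
    have h : ∀ m ∈ Finset.univ, u m = 0 := fun m _ => by
      have := Finset.sum_eq_zero_iff.mp hu m (Finset.mem_univ m)
      omega
    exact Finset.prod_eq_one fun m hm => by rw [h m hm, pow_zero]
  -- monomials of degree ≤ 2 are representable
  have hmon : ∀ u : Fin d → ℕ, (∑ m, u m) ≤ 2 →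
      ∃ B : Fin (d+1) → Fin (d+1) → ℝ, ∀ x : EuclideanSpace ℝ (Fin d),
        (∏ m, (x m) ^ (u m)) = ∑ i, ∑ j, B i j * (lam i x * lam j x) := by
    intro u hu
    have h012 : (∑ m, u m) = 0 ∨ (∑ m, u m) = 1 ∨ (∑ m, u m) = 2 := by omega
    rcases h012 with h0 | h1 | h2
    · exact ⟨fun _ _ => 1, fun x => by rw [hallz u h0 x, honerep x]⟩
    · obtain ⟨m0, hm0⟩ := hpos u (by omega)
      obtain ⟨heq, hsum⟩ := hext u m0 hm0
      refine ⟨fun i _ => a i m0, fun x => ?_⟩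
      rw [heq x, hallz _ (by omega) x, mul_one, ← hXrep m0 x]
    · obtain ⟨m0, hm0⟩ := hpos u (by omega)
      obtain ⟨heq, hsum⟩ := hext u m0 hm0
      obtain ⟨m1, hm1⟩ := hpos (Function.update u m0 (u m0 - 1)) (by omega)
      obtain ⟨heq', hsum'⟩ := hext (Function.update u m0 (u m0 - 1)) m1 hm1
      refine ⟨fun i j => a i m0 * a j m1, fun x => ?_⟩
      rw [heq x, heq' x, hallz _ (by omega) x, mul_one, ← hXXrep m0 m1 x]
  -- the full quadratic part
  have hqrep : ∃ B : Fin (d+1) → Fin (d+1) → ℝ, ∀ x : EuclideanSpace ℝ (Fin d),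
      MvPolynomial.eval (fun m => x m) q = ∑ i, ∑ j, B i j * (lam i x * lam j x) := by
    have hmon' : ∀ s : Fin d →₀ ℕ, ∃ B : Fin (d+1) → Fin (d+1) → ℝ,
        (∑ m, s m) ≤ 2 → ∀ x : EuclideanSpace ℝ (Fin d),
        (∏ m, (x m) ^ (s m)) = ∑ i, ∑ j, B i j * (lam i x * lam j x) := by
      intro s
      by_cases h : (∑ m, s m) ≤ 2
      · obtain ⟨B, hB⟩ := hmon (fun m => s m) h
        exact ⟨B, fun _ => hB⟩
      · exact ⟨0, fun h' => absurd h' h⟩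
    choose Bd hBd using hmon'
    have hdeg : ∀ s ∈ q.support, (∑ m, s m) ≤ 2 := by
      intro s hs
      have h1 := MvPolynomial.le_totalDegree hs
      have h2 : (s.sum fun _ e => e) = ∑ m, s m := Finsupp.sum_fintype _ _ (fun _ => rfl)
      omega
    refine ⟨fun i j => ∑ s ∈ q.support, q.coeff s * Bd s i j, fun x => ?_⟩
    rw [MvPolynomial.eval_eq']
    calc ∑ s ∈ q.support, q.coeff s * ∏ m, (x m) ^ (s m)
        = ∑ s ∈ q.support, ∑ i, ∑ j, (q.coeff s * Bd s i j) * (lam i x * lam j x) := by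
          refine Finset.sum_congr rfl fun s hs => ?_
          rw [hBd s (hdeg s hs) x]
          simp [Finset.mul_sum, mul_assoc]
      _ = ∑ i, ∑ j, ∑ s ∈ q.support, (q.coeff s * Bd s i j) * (lam i x * lam j x) := by
          rw [Finset.sum_comm]
          exact Finset.sum_congr rfl fun i _ => Finset.sum_comm
      _ = ∑ i, ∑ j, (∑ s ∈ q.support, q.coeff s * Bd s i j) * (lam i x * lam j x) := by
          simp [Finset.sum_mul]
  obtain ⟨B, hB⟩ := hqrep
  -- ## Step 3 : p as an explicit function and its derivative
  have hpfun : p = fun x => (∑ i, ∑ j, B i j * (lam i x * lam j x)) +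
      ∑ i, ∑ j, (if i < j then
        c i j * ((lam i x) ^ 2 * lam j x - lam i x * (lam j x) ^ 2) else 0) := by
    funext x
    rw [hrep x, hB x]
  have haff : ∀ (k : Fin (d+1)) (x : EuclideanSpace ℝ (Fin d)),
      HasFDerivAt (fun y => lam k y) (LinearMap.toContinuousLinearMap (lam k).linear) x := by
    intro k x
    have h : (fun y => lam k y) = fun y => (lam k).linear y + lam k 0 := by
      funext y
      conv_lhs => rw [(lam k).decomp]
      simp
    rw [h]
    simpa using (((lam k).linear.toContinuousLinearMap).hasFDerivAt (x := x)).add_const (lam k 0)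
  set CLM : Fin (d+1) → (EuclideanSpace ℝ (Fin d) →L[ℝ] ℝ) :=
    fun k => LinearMap.toContinuousLinearMap (lam k).linear with hCLMdef
  have hCLM : ∀ (k s t : Fin (d+1)), CLM k (a s - a t)
      = (if k = s then 1 else 0) - (if k = t then 1 else 0) := by
    intro k s t
    have h : CLM k (a s - a t) = lam k (a s) - lam k (a t) := by
      simp [hCLMdef, ← vsub_eq_sub]
    rw [h, hlam, hlam]
  have hquad : ∀ (i j t : Fin (d+1)),
      HasFDerivAt (fun x => B i j * (lam i x * lam j x))
        (B i j • (lam i (a t) • CLM j + lam j (a t) • CLM i)) (a t) :=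
    fun i j t => ((haff i (a t)).mul (haff j (a t))).const_mul (B i j)
  have hcub : ∀ (i j t : Fin (d+1)),
      HasFDerivAt (fun x => if i < j then
          c i j * ((lam i x) ^ 2 * lam j x - lam i x * (lam j x) ^ 2) else 0)
        (if i < j then c i j •
          (((lam i (a t) * lam i (a t)) • CLM j +
              lam j (a t) • (lam i (a t) • CLM i + lam i (a t) • CLM i)) -
            (lam i (a t) • (lam j (a t) • CLM j + lam j (a t) • CLM j) +
              (lam j (a t) * lam j (a t)) • CLM i)) else 0) (a t) := by
    intro i j t
    by_cases h : i < j
    · simp only [if_pos h]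
      have hfun : (fun x => c i j * ((lam i x) ^ 2 * lam j x - lam i x * (lam j x) ^ 2))
          = fun x => c i j * ((lam i x * lam i x) * lam j x - lam i x * (lam j x * lam j x)) := by
        funext x; ring
      rw [hfun]
      exact ((((haff i (a t)).mul (haff i (a t))).mul (haff j (a t))).sub
        ((haff i (a t)).mul ((haff j (a t)).mul (haff j (a t))))).const_mul (c i j)
    · simp only [if_neg h]
      exact hasFDerivAt_const _ _
  have hDfull : ∀ t : Fin (d+1), HasFDerivAt p
      ((∑ i, ∑ j, B i j • (lam i (a t) • CLM j + lam j (a t) • CLM i)) +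
        ∑ i, ∑ j, (if i < j then c i j •
          (((lam i (a t) * lam i (a t)) • CLM j +
              lam j (a t) • (lam i (a t) • CLM i + lam i (a t) • CLM i)) -
            (lam i (a t) • (lam j (a t) • CLM j + lam j (a t) • CLM j) +
              (lam j (a t) * lam j (a t)) • CLM i)) else 0)) (a t) := by
    intro t
    rw [hpfun]
    exact (HasFDerivAt.fun_sum fun i _ => HasFDerivAt.fun_sum fun j _ => hquad i j t).add
      (HasFDerivAt.fun_sum fun i _ => HasFDerivAt.fun_sum fun j _ => hcub i j t)
  -- ## Step 4 : the linear equations on B and c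
  have hBtt : ∀ t, B t t = 0 := by
    intro t
    have h0 := hval t
    rw [hpfun] at h0
    exact (trunc_aux_val (d+1) B c t (fun k => lam k (a t)) (fun k => hlam k t)).symm.trans h0
  have hEq : ∀ t s : Fin (d+1), s ≠ t →
      (B t s + B s t - 2 * B t t) +
        ((if t < s then c t s else 0) - (if s < t then c s t else 0)) = 0 := by
    intro t s hst
    have hf := (hDfull t).fderiv
    have h2 := hder t s hst
    rw [hf] at h2
    exact (trunc_aux_eval (d+1) B c t s CLM (fun k => lam k (a t)) (a s - a t)
      (fun k => hlam k t) (fun k => hCLM k s t)).symm.trans h2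
  have hBsym : ∀ i j : Fin (d+1), B i j + B j i = 0 := by
    intro i j
    rcases lt_trichotomy i j with h | h | h
    · have e1 := hEq i j (ne_of_gt h)
      have e2 := hEq j i (ne_of_lt h)
      rw [if_pos h, if_neg (not_lt_of_gt h)] at e1
      rw [if_neg (not_lt_of_gt h), if_pos h] at e2
      have hbi := hBtt i
      have hbj := hBtt j
      linarith
    · subst h
      have := hBtt i
      linarith
    · have e1 := hEq j i (ne_of_gt h)
      have e2 := hEq i j (ne_of_lt h)
      rw [if_pos h, if_neg (not_lt_of_gt h)] at e1
      rw [if_neg (not_lt_of_gt h), if_pos h] at e2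
      have hbi := hBtt i
      have hbj := hBtt j
      linarith
  have hc0 : ∀ i j : Fin (d+1), i < j → c i j = 0 := by
    intro i j h
    have e1 := hEq i j (ne_of_gt h)
    have e2 := hEq j i (ne_of_lt h)
    rw [if_pos h, if_neg (not_lt_of_gt h)] at e1
    rw [if_neg (not_lt_of_gt h), if_pos h] at e2
    have hbi := hBtt i
    have hbj := hBtt j
    linarith
  -- ## Step 5 : conclusion
  intro x
  rw [hrep x, hB x]
  have hcubzero : ∑ i, ∑ j, (if i < j then
      c i j * ((lam i x) ^ 2 * lam j x - lam i x * (lam j x) ^ 2) else 0) = 0 := by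
    refine Finset.sum_eq_zero fun i _ => Finset.sum_eq_zero fun j _ => ?_
    by_cases h : i < j
    · rw [if_pos h, hc0 i j h, zero_mul]
    · rw [if_neg h]
  have hquadzero : ∑ i, ∑ j, B i j * (lam i x * lam j x) = 0 := by
    have hswap : (∑ i, ∑ j, B i j * (lam i x * lam j x))
        = ∑ i, ∑ j, B j i * (lam i x * lam j x) := by
      rw [Finset.sum_comm]
      exact Finset.sum_congr rfl fun i _ => Finset.sum_congr rfl fun j _ => by ring
    have hzero : ∑ i, ∑ j, (B i j + B j i) * (lam i x * lam j x) = 0 :=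
      Finset.sum_eq_zero fun i _ => Finset.sum_eq_zero fun j _ => by rw [hBsym i j, zero_mul]
    have hsplit : ∑ i, ∑ j, (B i j + B j i) * (lam i x * lam j x)
        = (∑ i, ∑ j, B i j * (lam i x * lam j x)) + ∑ i, ∑ j, B j i * (lam i x * lam j x) := by
      rw [← Finset.sum_add_distrib]
      refine Finset.sum_congr rfl fun i _ => ?_
      rw [← Finset.sum_add_distrib]
      exact Finset.sum_congr rfl fun j _ => by ring
    have hSS := hsplit.symm.trans hzero
    linarith [hswap, hSS]
  rw [hquadzero, hcubzero, add_zero]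
end
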